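/- The vectors ψ^{(1)}, …, ψ^{(N)}, where ψ^{(i)}_j := x_j/(x_j − λ_i), form an orthogonal basis of ℝ^N with respect to the weighted inner product ⟨a, b⟩_μ := Σ_{j=1}^N (1/x_j)·a_j·b_j; that is, they are linearly independent and ⟨ψ^{(i)}, ψ^{(k)}⟩_μ = 0 whenever i ≠ k. -/
import Mathlib


/-- The eigenvectors `ψ i`, with `ψ i j = x j / (x j - lam i)` where
`0 = lam 0 < lam 1 < … < lam (N-1)` are the `N` zeros of `φ`, form an orthogonal basis of
`ℝ^N` for the weighted inner product `⟨a, b⟩_μ = ∑ j, (1 / x j) * a j * b j`: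
they are linearly independent (hence a basis, being `N` of them) and pairwise
`μ`-orthogonal. -/
theorem rem_trap_eigenvectors_orthogonal_basis
    (N : ℕ) (hN : 2 ≤ N) (x : Fin N → ℝ)
    (hx_pos : ∀ i, 0 < x i) (hx_mono : StrictMono x)
    (lam : Fin N → ℝ) (hlam_mono : StrictMono lam)
    (hlam_zero : lam ⟨0, by omega⟩ = 0)
    (hlam_ne : ∀ i j, x j ≠ lam i)
    (hlam_root : ∀ i, ∑ j : Fin N, lam i / (x j - lam i) = 0)
    (ψ : Fin N → Fin N → ℝ) (hψ : ∀ i j, ψ i j = x j / (x j - lam i)) :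
    LinearIndependent ℝ ψ ∧
    ∀ i k : Fin N, i ≠ k → ∑ j : Fin N, (1 / x j) * ψ i j * ψ k j = 0 := by
  haveI : NeZero N := ⟨by omega⟩
  have hxne : ∀ j, x j ≠ 0 := fun j => (hx_pos j).ne'
  have hden : ∀ i j, x j - lam i ≠ 0 := fun i j => sub_ne_zero.mpr (hlam_ne i j)
  have hψne : ∀ i j, ψ i j ≠ 0 := by
    intro i j
    rw [hψ]
    exact div_ne_zero (hxne j) (hden i j)
  have ortho : ∀ i k : Fin N, i ≠ k →
      ∑ j : Fin N, (1 / x j) * ψ i j * ψ k j = 0 := by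
    intro i k hik
    have hlamne : lam i - lam k ≠ 0 :=
      sub_ne_zero.mpr (fun h => hik (hlam_mono.injective h))
    have key : (lam i - lam k) * ∑ j : Fin N, (1 / x j) * ψ i j * ψ k j
        = (∑ j : Fin N, lam i / (x j - lam i))
          - (∑ j : Fin N, lam k / (x j - lam k)) := by
      rw [Finset.mul_sum, ← Finset.sum_sub_distrib]
      refine Finset.sum_congr rfl ?_
      intro j _
      rw [hψ, hψ]
      have h1 := hxne j
      have h2 := hden i j
      have h3 := hden k j
      field_simp
      ring
    rw [hlam_root, hlam_root, sub_zero] at key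
    exact (mul_eq_zero.mp key).resolve_left hlamne
  have hpos : ∀ k, 0 < ∑ j : Fin N, (1 / x j) * ψ k j * ψ k j := by
    intro k
    refine Finset.sum_pos ?_ Finset.univ_nonempty
    intro j _
    have h1 := hx_pos j
    have h2 := hψne k j
    have : (1 / x j) * ψ k j * ψ k j = (1 / x j) * (ψ k j) ^ 2 := by ring
    rw [this]
    positivity
  refine ⟨?_, ortho⟩
  rw [Fintype.linearIndependent_iff]
  intro g hg k
  have h0 : ∀ j, (∑ i : Fin N, g i * ψ i j) = 0 := by
    intro j
    have := congrFun hg j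
    simpa using this
  have hsum : ∑ i : Fin N, g i * ∑ j : Fin N, (1 / x j) * ψ i j * ψ k j = 0 := by
    calc ∑ i : Fin N, g i * ∑ j : Fin N, (1 / x j) * ψ i j * ψ k j
        = ∑ j : Fin N, (1 / x j) * (∑ i : Fin N, g i * ψ i j) * ψ k j := by
          simp_rw [Finset.mul_sum, Finset.sum_mul]
          rw [Finset.sum_comm]
          refine Finset.sum_congr rfl fun j _ => Finset.sum_congr rfl fun i _ => by ring
      _ = 0 := by
          refine Finset.sum_eq_zero fun j _ => ?_
          rw [h0 j]
          ring
  have hsingle : ∑ i : Fin N, g i * ∑ j : Fin N, (1 / x j) * ψ i j * ψ k j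
      = g k * ∑ j : Fin N, (1 / x j) * ψ k j * ψ k j := by
    refine Finset.sum_eq_single k ?_ ?_
    · intro i _ hik
      rw [ortho i k hik, mul_zero]
    · intro h
      exact absurd (Finset.mem_univ k) h
  rw [hsingle] at hsum
  exact (mul_eq_zero.mp hsum).resolve_right (hpos k).ne'
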